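/- Assume z_max := max_{1 ≤ j ≤ N} z_j > 0 and fix φ_0 ∈ ℝ. For q_0 < 0 write f_{q_0}(φ) = q_0 + Σ_j z_j c_j^b exp(−z_j φ) and F_{q_0}(φ) = q_0 φ − Σ_j c_j^b exp(−z_j φ), let φ*(q_0) be the unique zero of f_{q_0}, and set σ(q_0)² = 2 (F_{q_0}(φ*(q_0)) − F_{q_0}(φ_0)). Then σ(q_0)² / (q_0 ln |q_0|) → −2/z_max as q_0 → −∞. -/

import Mathlib

open Real Filter Set Topology

private lemma stmt14_E1 (x L zm : ℝ) (hL : L ≠ 0) (hzm : zm ≠ 0) :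
    ((x - L) / zm) / L = x / (zm * L) - 1 / zm := by
  field_simp

private lemma stmt14_E2 (cs b q L : ℝ) (hb : b ≠ 0) (hq : q ≠ 0) (hL : L ≠ 0) :
    cs * (2 * (-q) / b) * (q * L)⁻¹ = -((2 * cs / b) / L) := by
  field_simp

private lemma stmt14_E3 (p p0 s s0 q L : ℝ) (hq : q ≠ 0) (hL : L ≠ 0) :
    2 * (p / L) - 2 * (s / (q * L)) - 2 * (p0 / L) + 2 * (s0 / (q * L))
      = 2 * ((q * p - s) - (q * p0 - s0)) / (q * L) := by
  field_simp
  ring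

set_option maxHeartbeats 1000000 in
/-- Asymptotics of the maximum surface charge density for large negative
fixed charge: if `z_max := max_j z j > 0`, `φ*(q0)` is the unique zero of
`f_{q0}`, and `σ(q0)² = 2 (F_{q0}(φ*(q0)) − F_{q0}(φ0))`, then
`σ(q0)² / (q0 ln |q0|) → −2/z_max` as `q0 → −∞`. -/
theorem stmt14 {N : ℕ} (hN : 1 ≤ N) (z c : Fin N → ℝ)
    (hz : ∀ j, z j ≠ 0) (hc : ∀ j, 0 < c j)
    (zmax : ℝ) (hzmax_mem : ∃ l, z l = zmax) (hzmax_ge : ∀ j, z j ≤ zmax)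
    (hzmax_pos : 0 < zmax)
    (φ0 : ℝ)
    (f F : ℝ → ℝ → ℝ)
    (hf : ∀ q0 φ : ℝ, f q0 φ = q0 + ∑ j, z j * c j * Real.exp (-(z j) * φ))
    (hF : ∀ q0 φ : ℝ, F q0 φ = q0 * φ - ∑ j, c j * Real.exp (-(z j) * φ))
    (φstar : ℝ → ℝ) (hstar : ∀ q0 : ℝ, q0 < 0 → f q0 (φstar q0) = 0)
    (σsq : ℝ → ℝ)
    (hσsq : ∀ q0 : ℝ, σsq q0 = 2 * (F q0 (φstar q0) - F q0 φ0)) :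
    Tendsto (fun q0 : ℝ => σsq q0 / (q0 * Real.log |q0|)) atBot
      (𝓝 (-2 / zmax)) := by
  obtain ⟨l, hl⟩ := hzmax_mem
  have hzm0 : zmax ≠ 0 := ne_of_gt hzmax_pos
  set A : ℝ := ∑ j, |z j| * c j with hAdef
  have hA_pos : 0 < A :=
    Finset.sum_pos (fun j _ => mul_pos (abs_pos.2 (hz j)) (hc j)) ⟨l, Finset.mem_univ l⟩
  set B : ℝ := zmax * c l with hBdef
  have hB_pos : 0 < B := mul_pos hzmax_pos (hc l)
  set Cs : ℝ := ∑ j, c j with hCsdef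
  have hCs_pos : 0 < Cs := Finset.sum_pos (fun j _ => hc j) ⟨l, Finset.mem_univ l⟩
  -- main pointwise estimates
  have main : ∀ q0 : ℝ, q0 ≤ -(A + 2) →
      (Real.log B - Real.log 2 - Real.log (-q0)) / zmax ≤ φstar q0 ∧
      φstar q0 ≤ (Real.log A - Real.log (-q0)) / zmax ∧
      (∑ j, c j * Real.exp (-(z j) * φstar q0)) ≤ Cs * (2 * (-q0) / B) := by
    intro q0 hq0
    have hq0A : A < -q0 := by linarith
    have hq0neg : q0 < 0 := by linarith
    have hq0pos : 0 < -q0 := by linarith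
    set φ := φstar q0 with hφdef
    have hsum : ∑ j, z j * c j * Real.exp (-(z j) * φ) = -q0 := by
      have h0 := hstar q0 hq0neg
      rw [hf] at h0
      linarith
    have hφle : φ ≤ 0 := by
      by_contra hcon
      push_neg at hcon
      have hb : ∑ j, z j * c j * Real.exp (-(z j) * φ) ≤ A := by
        rw [hAdef]
        refine Finset.sum_le_sum fun j _ => ?_
        rcases (hz j).lt_or_gt with hneg | hpos
        · have h1 : z j * c j * Real.exp (-(z j) * φ) ≤ 0 :=
            mul_nonpos_of_nonpos_of_nonneg
              (mul_nonpos_of_nonpos_of_nonneg hneg.le (hc j).le) (Real.exp_pos _).le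
          have h2 : 0 ≤ |z j| * c j := mul_nonneg (abs_nonneg _) (hc j).le
          linarith
        · have he : Real.exp (-(z j) * φ) ≤ 1 := by
            rw [← Real.exp_zero]
            exact Real.exp_le_exp.2 (by nlinarith)
          rw [abs_of_pos hpos]
          nlinarith [mul_pos hpos (hc j)]
      linarith
    have hexp_cmp : ∀ j : Fin N, Real.exp (-(z j) * φ) ≤ Real.exp (-zmax * φ) := fun j =>
      Real.exp_le_exp.2 (by nlinarith [hzmax_ge j])
    have hup : -q0 ≤ A * Real.exp (-zmax * φ) := by
      rw [← hsum, hAdef, Finset.sum_mul]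
      refine Finset.sum_le_sum fun j _ => ?_
      rcases (hz j).lt_or_gt with hneg | hpos
      · have h1 : z j * c j * Real.exp (-(z j) * φ) ≤ 0 :=
          mul_nonpos_of_nonpos_of_nonneg
            (mul_nonpos_of_nonpos_of_nonneg hneg.le (hc j).le) (Real.exp_pos _).le
        have h2 : 0 ≤ |z j| * c j * Real.exp (-zmax * φ) :=
          mul_nonneg (mul_nonneg (abs_nonneg _) (hc j).le) (Real.exp_pos _).le
        linarith
      · rw [abs_of_pos hpos]
        have h3 := hexp_cmp j
        nlinarith [mul_pos hpos (hc j)]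
    have hterm_nonneg : ∀ j : Fin N, 0 ≤ z j * c j * Real.exp (-(z j) * φ) + |z j| * c j := by
      intro j
      rcases (hz j).lt_or_gt with hneg | hpos
      · have he : Real.exp (-(z j) * φ) ≤ 1 := by
          rw [← Real.exp_zero]
          exact Real.exp_le_exp.2 (by nlinarith)
        rw [abs_of_neg hneg]
        nlinarith [mul_neg_of_neg_of_pos hneg (hc j), Real.exp_pos (-(z j) * φ)]
      · have h1 : 0 ≤ z j * c j * Real.exp (-(z j) * φ) :=
          mul_nonneg (mul_nonneg hpos.le (hc j).le) (Real.exp_pos _).le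
        have h2 : 0 ≤ |z j| * c j := mul_nonneg (abs_nonneg _) (hc j).le
        linarith
    have hlow : B * Real.exp (-zmax * φ) ≤ -q0 + A := by
      have hsingle : z l * c l * Real.exp (-(z l) * φ) + |z l| * c l ≤
          ∑ j, (z j * c j * Real.exp (-(z j) * φ) + |z j| * c j) :=
        Finset.single_le_sum (fun j _ => hterm_nonneg j) (Finset.mem_univ l)
      rw [Finset.sum_add_distrib, hsum, ← hAdef] at hsingle
      have h2 : 0 ≤ |z l| * c l := mul_nonneg (abs_nonneg _) (hc l).le
      have h3 : zmax * c l * Real.exp (-zmax * φ) = z l * c l * Real.exp (-(z l) * φ) := by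
        rw [hl]
      rw [hBdef, h3]
      linarith
    have hexp_le : Real.exp (-zmax * φ) ≤ 2 * (-q0) / B := by
      rw [le_div_iff₀ hB_pos]
      have : Real.exp (-zmax * φ) * B = B * Real.exp (-zmax * φ) := mul_comm _ _
      rw [this]
      linarith
    refine ⟨?_, ?_, ?_⟩
    · rw [div_le_iff₀ hzmax_pos]
      have h1 : -zmax * φ ≤ Real.log (2 * (-q0) / B) := by
        rw [← Real.log_exp (-zmax * φ)]
        exact Real.log_le_log (Real.exp_pos _) hexp_le
      rw [Real.log_div (by linarith : (2 * (-q0) : ℝ) ≠ 0) (ne_of_gt hB_pos),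
        Real.log_mul two_ne_zero (ne_of_gt hq0pos)] at h1
      linarith
    · rw [le_div_iff₀ hzmax_pos]
      have h1 : Real.log (-q0) ≤ Real.log (A * Real.exp (-zmax * φ)) :=
        Real.log_le_log hq0pos hup
      rw [Real.log_mul (ne_of_gt hA_pos) (Real.exp_pos _).ne', Real.log_exp] at h1
      linarith
    · calc (∑ j, c j * Real.exp (-(z j) * φ)) ≤ ∑ j, c j * Real.exp (-zmax * φ) :=
            Finset.sum_le_sum fun j _ => mul_le_mul_of_nonneg_left (hexp_cmp j) (hc j).le
        _ = Cs * Real.exp (-zmax * φ) := by rw [hCsdef, Finset.sum_mul]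
        _ ≤ Cs * (2 * (-q0) / B) := mul_le_mul_of_nonneg_left hexp_le hCs_pos.le
  -- limit machinery
  have hL : Tendsto (fun q0 : ℝ => Real.log (-q0)) atBot atTop :=
    Real.tendsto_log_atTop.comp tendsto_neg_atBot_atTop
  have hLmul : Tendsto (fun q0 : ℝ => zmax * Real.log (-q0)) atBot atTop :=
    hL.const_mul_atTop hzmax_pos
  have hnegmul : Tendsto (fun q0 : ℝ => (-q0) * Real.log (-q0)) atBot atTop :=
    tendsto_neg_atBot_atTop.atTop_mul_atTop₀ hL
  have hev : ∀ᶠ q0 : ℝ in atBot, q0 ≤ -(A + 2) := eventually_le_atBot _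
  have hevL : ∀ᶠ q0 : ℝ in atBot, 0 < Real.log (-q0) := hL.eventually_gt_atTop 0
  have hevq : ∀ᶠ q0 : ℝ in atBot, q0 < 0 := eventually_lt_atBot 0
  have T1 : Tendsto (fun q0 : ℝ => φstar q0 / Real.log (-q0)) atBot (𝓝 (-1 / zmax)) := by
    apply tendsto_of_tendsto_of_tendsto_of_le_of_le'
      (g := fun q0 : ℝ => (Real.log B - Real.log 2) / (zmax * Real.log (-q0)) - 1 / zmax)
      (h := fun q0 : ℝ => Real.log A / (zmax * Real.log (-q0)) - 1 / zmax)
    · have h1 := (tendsto_const_nhds (x := Real.log B - Real.log 2)).div_atTop hLmul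
      have h2 := h1.sub (tendsto_const_nhds (x := (1:ℝ) / zmax))
      have h3 : (0:ℝ) - 1 / zmax = -1 / zmax := by ring
      rwa [h3] at h2
    · have h1 := (tendsto_const_nhds (x := Real.log A)).div_atTop hLmul
      have h2 := h1.sub (tendsto_const_nhds (x := (1:ℝ) / zmax))
      have h3 : (0:ℝ) - 1 / zmax = -1 / zmax := by ring
      rwa [h3] at h2
    · filter_upwards [hev, hevL] with q0 hq hLpos
      obtain ⟨h1, _, _⟩ := main q0 hq
      have hLne : Real.log (-q0) ≠ 0 := ne_of_gt hLpos
      have h3 : ((Real.log B - Real.log 2 - Real.log (-q0)) / zmax) / Real.log (-q0)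
          ≤ φstar q0 / Real.log (-q0) := by gcongr
      calc (Real.log B - Real.log 2) / (zmax * Real.log (-q0)) - 1 / zmax
          = ((Real.log B - Real.log 2 - Real.log (-q0)) / zmax) / Real.log (-q0) :=
            (stmt14_E1 (Real.log B - Real.log 2) _ _ hLne hzm0).symm
        _ ≤ φstar q0 / Real.log (-q0) := h3
    · filter_upwards [hev, hevL] with q0 hq hLpos
      obtain ⟨_, h2, _⟩ := main q0 hq
      have hLne : Real.log (-q0) ≠ 0 := ne_of_gt hLpos
      have h3 : φstar q0 / Real.log (-q0)
          ≤ ((Real.log A - Real.log (-q0)) / zmax) / Real.log (-q0) := by gcongr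
      calc φstar q0 / Real.log (-q0)
          ≤ ((Real.log A - Real.log (-q0)) / zmax) / Real.log (-q0) := h3
        _ = Real.log A / (zmax * Real.log (-q0)) - 1 / zmax :=
            stmt14_E1 (Real.log A) _ _ hLne hzm0
  have T2 : Tendsto (fun q0 : ℝ =>
      (∑ j, c j * Real.exp (-(z j) * φstar q0)) / (q0 * Real.log (-q0))) atBot (𝓝 0) := by
    apply tendsto_of_tendsto_of_tendsto_of_le_of_le'
      (g := fun q0 : ℝ => -((2 * Cs / B) / Real.log (-q0)))
      (h := fun _ : ℝ => (0:ℝ))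
    · have := ((tendsto_const_nhds (x := 2 * Cs / B)).div_atTop hL).neg
      simpa using this
    · exact tendsto_const_nhds
    · filter_upwards [hev, hevL, hevq] with q0 hq hLpos hq0neg
      obtain ⟨_, _, hS⟩ := main q0 hq
      have hLne : Real.log (-q0) ≠ 0 := ne_of_gt hLpos
      have hq0ne : q0 ≠ 0 := ne_of_lt hq0neg
      have hden : q0 * Real.log (-q0) < 0 := mul_neg_of_neg_of_pos hq0neg hLpos
      have h4 : Cs * (2 * (-q0) / B) * (q0 * Real.log (-q0))⁻¹ ≤
          (∑ j, c j * Real.exp (-(z j) * φstar q0)) * (q0 * Real.log (-q0))⁻¹ :=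
        mul_le_mul_of_nonpos_right hS (inv_nonpos.2 hden.le)
      calc -((2 * Cs / B) / Real.log (-q0))
          = Cs * (2 * (-q0) / B) * (q0 * Real.log (-q0))⁻¹ :=
            (stmt14_E2 Cs B q0 _ (ne_of_gt hB_pos) hq0ne hLne).symm
        _ ≤ (∑ j, c j * Real.exp (-(z j) * φstar q0)) * (q0 * Real.log (-q0))⁻¹ := h4
        _ = (∑ j, c j * Real.exp (-(z j) * φstar q0)) / (q0 * Real.log (-q0)) :=
            (div_eq_mul_inv _ _).symm
    · filter_upwards [hevL, hevq] with q0 hLpos hq0neg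
      have hS0 : 0 ≤ ∑ j, c j * Real.exp (-(z j) * φstar q0) :=
        Finset.sum_nonneg fun j _ => mul_nonneg (hc j).le (Real.exp_pos _).le
      have hden : q0 * Real.log (-q0) < 0 := mul_neg_of_neg_of_pos hq0neg hLpos
      exact div_nonpos_of_nonneg_of_nonpos hS0 hden.le
  have T3 : Tendsto (fun q0 : ℝ => φ0 / Real.log (-q0)) atBot (𝓝 0) :=
    tendsto_const_nhds.div_atTop hL
  have T4 : Tendsto (fun q0 : ℝ =>
      (∑ j, c j * Real.exp (-(z j) * φ0)) / (q0 * Real.log (-q0))) atBot (𝓝 0) := by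
    have heq : (fun q0 : ℝ => (∑ j, c j * Real.exp (-(z j) * φ0)) / (q0 * Real.log (-q0)))
        = fun q0 : ℝ => -((∑ j, c j * Real.exp (-(z j) * φ0)) / ((-q0) * Real.log (-q0))) := by
      funext q0
      rw [neg_mul, div_neg, neg_neg]
    rw [heq]
    have := ((tendsto_const_nhds
      (x := ∑ j, c j * Real.exp (-(z j) * φ0))).div_atTop hnegmul).neg
    simpa using this
  have hfinal : Tendsto (fun q0 : ℝ =>
      2 * (φstar q0 / Real.log (-q0))
      - 2 * ((∑ j, c j * Real.exp (-(z j) * φstar q0)) / (q0 * Real.log (-q0)))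
      - 2 * (φ0 / Real.log (-q0))
      + 2 * ((∑ j, c j * Real.exp (-(z j) * φ0)) / (q0 * Real.log (-q0)))) atBot
      (𝓝 (2 * (-1 / zmax) - 2 * 0 - 2 * 0 + 2 * 0)) :=
    (((T1.const_mul 2).sub (T2.const_mul 2)).sub (T3.const_mul 2)).add (T4.const_mul 2)
  have hval : (2 * (-1 / zmax) - 2 * 0 - 2 * 0 + 2 * 0 : ℝ) = -2 / zmax := by ring
  rw [hval] at hfinal
  apply hfinal.congr'
  filter_upwards [hev, hevL, hevq] with q0 hq hLpos hq0neg
  have hLne : Real.log (-q0) ≠ 0 := ne_of_gt hLpos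
  have hq0ne : q0 ≠ 0 := ne_of_lt hq0neg
  rw [hσsq, hF, hF, abs_of_neg hq0neg]
  exact stmt14_E3 _ _ _ _ _ _ hq0ne hLne
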